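/- arXiv:1511.09014 — 5 statements merged into one kernel-verified Lean document; each statement's English description precedes it below -/
import Mathlib

section
/- Let z_1,…,z_n be pairwise distinct complex numbers, M^1,…,M^n complex numbers, κ a nonzero complex number, and set a(t) = -(1/κ) Σ_{j=1}^n M^j/(t-z_j). Fix i ∈ {1,…,n} and an integer b ≥ 1, and let f(t) = (t-z_i)^{-b}. Then for all t ∉ {z_1,…,z_n}: κ (f'(t) + a(t) f(t)) = -(M^i + bκ)(t-z_i)^{-b-1} + Σ_{k=1}^{b} Σ_{j≠i} M^j (z_j-z_i)^{-k} (t-z_i)^{k-b-1} - Σ_{j≠i} M^j (z_j-z_i)^{-b} (t-z_j)^{-1}. -/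
lemma key_partial_frac (x w : ℂ) (hx : x ≠ 0) (hw : w ≠ 0) (hxw : x - w ≠ 0) (b : ℕ) :
    (x ^ b)⁻¹ * (x - w)⁻¹ =
      -∑ k ∈ Finset.Icc 1 b, (w ^ k)⁻¹ * (x ^ (b + 1 - k))⁻¹ + (w ^ b)⁻¹ * (x - w)⁻¹ := by
  induction b with
  | zero => simp
  | succ b ih =>
    rw [← Finset.insert_Icc_right_eq_Icc_add_one (by omega), Finset.sum_insert (by simp)]
    have hs : ∑ k ∈ Finset.Icc 1 b, (w ^ k)⁻¹ * (x ^ (b + 1 + 1 - k))⁻¹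
        = (∑ k ∈ Finset.Icc 1 b, (w ^ k)⁻¹ * (x ^ (b + 1 - k))⁻¹) * x⁻¹ := by
      rw [Finset.sum_mul]
      refine Finset.sum_congr rfl fun k hk => ?_
      simp only [Finset.mem_Icc] at hk
      have : b + 1 + 1 - k = (b + 1 - k) + 1 := by omega
      rw [this, pow_succ, mul_inv]
      ring
    have ih' : ∑ k ∈ Finset.Icc 1 b, (w ^ k)⁻¹ * (x ^ (b + 1 - k))⁻¹
        = (w ^ b)⁻¹ * (x - w)⁻¹ - (x ^ b)⁻¹ * (x - w)⁻¹ := by linear_combination ih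
    have h1 : (w ^ b)⁻¹ * x⁻¹ * (x - w)⁻¹
        = -((w ^ (b + 1))⁻¹ * x⁻¹) + (w ^ (b + 1))⁻¹ * (x - w)⁻¹ := by
      field_simp
      ring
    have h2 : b + 1 + 1 - (b + 1) = 1 := by omega
    rw [hs, ih', h2, pow_one, pow_succ, mul_inv]
    linear_combination h1

/-- Formula (bff): the twisted differential of `(t - z_i)^{-b}`. -/
theorem stmt_2 (n : ℕ) (z : Fin n → ℂ) (hz : Function.Injective z)
    (M : Fin n → ℂ) (κ : ℂ) (hκ : κ ≠ 0)
    (a : ℂ → ℂ) (ha : ∀ t, a t = -(1 / κ) * ∑ j, M j / (t - z j))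
    (i : Fin n) (b : ℕ) (hb : 1 ≤ b)
    (f : ℂ → ℂ) (hf : ∀ t, f t = (t - z i) ^ (-(b : ℤ)))
    (t : ℂ) (ht : ∀ j, t ≠ z j) :
    κ * (deriv f t + a t * f t) =
      -(M i + b * κ) * (t - z i) ^ (-(b : ℤ) - 1) +
        (∑ k ∈ Finset.Icc 1 b, ∑ j ∈ Finset.univ.filter (· ≠ i),
          M j * (z j - z i) ^ (-(k : ℤ)) * (t - z i) ^ ((k : ℤ) - b - 1)) -
        ∑ j ∈ Finset.univ.filter (· ≠ i),
          M j * (z j - z i) ^ (-(b : ℤ)) * (t - z j)⁻¹ := by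
  have hti : t - z i ≠ 0 := sub_ne_zero.mpr (ht i)
  have hXb : (t - z i) ^ (-(b : ℤ)) = ((t - z i) ^ b)⁻¹ := by
    rw [zpow_neg, zpow_natCast]
  have hXb1 : (t - z i) ^ (-(b : ℤ) - 1) = ((t - z i) ^ (b + 1))⁻¹ := by
    rw [show -(b : ℤ) - 1 = -((b + 1 : ℕ) : ℤ) by push_cast; ring, zpow_neg, zpow_natCast]
  -- derivative
  have hfe : f = fun s => (s - z i) ^ (-(b : ℤ)) := funext hf
  have hderiv : deriv f t = -(b : ℂ) * ((t - z i) ^ (b + 1))⁻¹ := by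
    have H := (hasDerivAt_zpow (-(b : ℤ)) (t - z i) (Or.inl hti)).comp t
        ((hasDerivAt_id t).sub_const (z i))
    have H' : HasDerivAt (fun s : ℂ => (s - z i) ^ (-(b : ℤ)))
        (((-(b : ℤ) : ℤ) : ℂ) * (t - z i) ^ (-(b : ℤ) - 1) * 1) t := H
    rw [hfe, H'.deriv, hXb1]
    push_cast
    ring
  -- split the sum over j
  have hsplit : ∑ j, M j / (t - z j)
      = M i / (t - z i) + ∑ j ∈ Finset.univ.filter (· ≠ i), M j / (t - z j) := by
    rw [Finset.filter_ne']
    exact (Finset.add_sum_erase _ _ (Finset.mem_univ i)).symm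
  -- per-j partial fraction identity, combined over j
  have hR : (∑ k ∈ Finset.Icc 1 b, ∑ j ∈ Finset.univ.filter (· ≠ i),
        M j * (z j - z i) ^ (-(k : ℤ)) * (t - z i) ^ ((k : ℤ) - b - 1)) -
      ∑ j ∈ Finset.univ.filter (· ≠ i), M j * (z j - z i) ^ (-(b : ℤ)) * (t - z j)⁻¹
      = -∑ j ∈ Finset.univ.filter (· ≠ i),
          M j * ((t - z i) ^ b)⁻¹ * (t - z j)⁻¹ := by
    rw [Finset.sum_comm, ← Finset.sum_sub_distrib, ← Finset.sum_neg_distrib]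
    refine Finset.sum_congr rfl fun j hj => ?_
    have hji : j ≠ i := by simpa using hj
    have hw : z j - z i ≠ 0 := sub_ne_zero.mpr fun h => hji (hz h)
    have htj : t - z j ≠ 0 := sub_ne_zero.mpr (ht j)
    have hk := key_partial_frac (t - z i) (z j - z i) hti hw
      (by rw [show t - z i - (z j - z i) = t - z j by ring]; exact htj) b
    rw [show t - z i - (z j - z i) = t - z j by ring] at hk
    have hinner : ∑ k ∈ Finset.Icc 1 b,
        M j * (z j - z i) ^ (-(k : ℤ)) * (t - z i) ^ ((k : ℤ) - b - 1)
        = M j * ∑ k ∈ Finset.Icc 1 b,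
            ((z j - z i) ^ k)⁻¹ * ((t - z i) ^ (b + 1 - k))⁻¹ := by
      rw [Finset.mul_sum]
      refine Finset.sum_congr rfl fun k hk' => ?_
      simp only [Finset.mem_Icc] at hk'
      rw [show (k : ℤ) - b - 1 = -((b + 1 - k : ℕ) : ℤ) by push_cast; omega,
        zpow_neg, zpow_natCast, zpow_neg, zpow_natCast]
      ring
    rw [hinner, show (z j - z i) ^ (-(b : ℤ)) = ((z j - z i) ^ b)⁻¹ by
      rw [zpow_neg, zpow_natCast]]
    linear_combination (M j) * hk
  rw [add_sub_assoc, hR, hderiv, ha t, hf t, hsplit, hXb, hXb1]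
  have hTB : ∑ j ∈ Finset.univ.filter (· ≠ i), M j * ((t - z i) ^ b)⁻¹ * (t - z j)⁻¹
      = (∑ j ∈ Finset.univ.filter (· ≠ i), M j / (t - z j)) * ((t - z i) ^ b)⁻¹ := by
    rw [Finset.sum_mul]
    exact Finset.sum_congr rfl fun j _ => by rw [div_eq_mul_inv]; ring
  rw [hTB]
  have hB1 : ((t - z i) ^ (b + 1))⁻¹ = (t - z i)⁻¹ * ((t - z i) ^ b)⁻¹ := by
    rw [pow_succ, mul_inv]; ring
  rw [hB1]
  field_simp
  ring
end

section
/- Let z_1,…,z_n (n ≥ 2) be pairwise distinct complex numbers, M^1,…,M^n complex numbers, and κ a nonzero complex number with M^1 = -κ. Set a(t) = -(1/κ) Σ_{j=1}^n M^j/(t-z_j) and g(t) = -κ/(t-z_1). Then for all t ∉ {z_1,…,z_n}: Σ_{j=2}^n (M^j/(z_j-z_1)) · 1/(t-z_j) - (Σ_{j=2}^n M^j/(z_j-z_1)) · 1/(t-z_1) = g'(t) + a(t) g(t). -/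
/-- The resonance relation at the end of Section 6: if `M^1 = -κ`, then
`Σ_{j>1} (M^j/(z_j-z_1))/(t-z_j) - (Σ_{j>1} M^j/(z_j-z_1))/(t-z_1)` is the twisted
differential of `g(t) = -κ/(t-z_1)`. -/
theorem stmt_6 (n : ℕ) (hn : 2 ≤ n) (z : Fin n → ℂ) (hz : Function.Injective z)
    (M : Fin n → ℂ) (κ : ℂ) (hκ : κ ≠ 0)
    (hres : M ⟨0, by omega⟩ = -κ)
    (a : ℂ → ℂ) (ha : ∀ t, a t = -(1 / κ) * ∑ j, M j / (t - z j))
    (g : ℂ → ℂ) (hg : ∀ t, g t = -κ / (t - z ⟨0, by omega⟩))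
    (t : ℂ) (ht : ∀ j, t ≠ z j) :
    (∑ j ∈ Finset.univ.filter (· ≠ (⟨0, by omega⟩ : Fin n)),
        (M j / (z j - z ⟨0, by omega⟩)) * (t - z j)⁻¹) -
      (∑ j ∈ Finset.univ.filter (· ≠ (⟨0, by omega⟩ : Fin n)),
        M j / (z j - z ⟨0, by omega⟩)) * (t - z ⟨0, by omega⟩)⁻¹ =
      deriv g t + a t * g t := by
  set i0 : Fin n := ⟨0, by omega⟩ with hi0
  have ht' : ∀ j, t - z j ≠ 0 := fun j => sub_ne_zero.mpr (ht j)
  have ht0 : t - z i0 ≠ 0 := ht' i0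
  have hgfun : g = fun s => -κ * (s - z i0)⁻¹ := by
    funext s; rw [hg]; ring
  have hderiv : deriv g t = κ / (t - z i0) ^ 2 := by
    rw [hgfun]
    have h1 : HasDerivAt (fun s : ℂ => s - z i0) 1 t := (hasDerivAt_id t).sub_const _
    have h2 : HasDerivAt (fun s : ℂ => (s - z i0)⁻¹) (-1 / (t - z i0) ^ 2) t := by
      simpa [Pi.inv_def] using h1.inv ht0
    rw [(h2.const_mul (-κ)).deriv]
    field_simp
  have hfilter : Finset.univ.filter (· ≠ i0) = Finset.univ.erase i0 :=
    Finset.filter_ne' _ _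
  have hsplit : ∑ j, M j / (t - z j)
      = M i0 / (t - z i0) + ∑ j ∈ Finset.univ.erase i0, M j / (t - z j) :=
    (Finset.add_sum_erase _ _ (Finset.mem_univ i0)).symm
  have hRHS : deriv g t + a t * g t
      = (∑ j ∈ Finset.univ.erase i0, M j / (t - z j)) * (t - z i0)⁻¹ := by
    rw [hderiv, ha, hg, hsplit, hres]
    generalize (∑ j ∈ Finset.univ.erase i0, M j / (t - z j)) = S
    field_simp
    ring
  rw [hRHS, hfilter, Finset.sum_mul, Finset.sum_mul, ← Finset.sum_sub_distrib]
  refine Finset.sum_congr rfl fun j hj => ?_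
  have hj0 : j ≠ i0 := Finset.ne_of_mem_erase hj
  have hzj : z j - z i0 ≠ 0 := sub_ne_zero.mpr fun h => hj0 (hz h)
  simp only [← div_eq_mul_inv, div_div]
  rw [div_sub_div _ _ (mul_ne_zero hzj (ht' j)) (mul_ne_zero hzj ht0),
    div_eq_div_iff (mul_ne_zero (mul_ne_zero hzj (ht' j)) (mul_ne_zero hzj ht0))
      (mul_ne_zero (ht' j) ht0)]
  ring
end

section
/- Let z_1,…,z_n be pairwise distinct complex numbers, M^1,…,M^n complex numbers, κ nonzero, and a(t) = -(1/κ) Σ_{j=1}^n M^j/(t-z_j). Fix i ∈ {1,…,n} and suppose M^i = -a_i κ for a nonnegative integer a_i. If f is a rational function whose only poles lie in {z_1,…,z_n} and whose pole order at z_i is at most a_i, then the pole order of f'(t) + a(t) f(t) at z_i is also at most a_i. -/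
open Polynomial in
theorem aux_derivative_prod {ι : Type*} [DecidableEq ι] (s : Finset ι) (f : ι → Polynomial ℂ) :
    derivative (∏ i ∈ s, f i) = ∑ i ∈ s, (∏ j ∈ s.erase i, f j) * derivative (f i) := by
  induction s using Finset.induction_on with
  | empty => simp
  | @insert a s' hans ih =>
    rw [Finset.prod_insert hans, derivative_mul, ih, Finset.sum_insert hans,
      Finset.erase_insert hans, Finset.mul_sum, mul_comm (derivative (f a))]
    congr 1
    refine Finset.sum_congr rfl fun i hi => ?_
    rw [Finset.erase_insert_of_ne (fun h => hans (by rw [h]; exact hi)),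
      Finset.prod_insert (fun h => hans (Finset.mem_of_mem_erase h)), mul_assoc]


open Polynomial

open Finset in
/-- Restricted complex is a subcomplex: if `M^i = -a_i κ` with `a_i ∈ ℕ`, and `f` is a rational
function whose only poles lie in `{z_1,…,z_n}` with pole order at `z_i` at most `a_i`
(represented as `f = P / ∏_j (t-z_j)^{c_j}` with `c_i ≤ a_i`), then the twisted differential
`f' + a f` again has pole order at most `a_i` at `z_i` (it admits a representation
`Q / ∏_j (t-z_j)^{d_j}` with `d_i ≤ a_i`). -/
theorem stmt_7 (n : ℕ) (z : Fin n → ℂ) (hz : Function.Injective z)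
    (M : Fin n → ℂ) (κ : ℂ) (hκ : κ ≠ 0)
    (a : ℂ → ℂ) (ha : ∀ t, a t = -(1 / κ) * ∑ j, M j / (t - z j))
    (i : Fin n) (ai : ℕ) (hres : M i = -(ai : ℂ) * κ)
    (f : ℂ → ℂ) (P : Polynomial ℂ) (c : Fin n → ℕ) (hci : c i ≤ ai)
    (hf : ∀ t, (∀ j, t ≠ z j) → f t = P.eval t / ∏ j, (t - z j) ^ c j) :
    ∃ (Q : Polynomial ℂ) (d : Fin n → ℕ), d i ≤ ai ∧
      ∀ t, (∀ j, t ≠ z j) →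
        deriv f t + a t * f t = Q.eval t / ∏ j, (t - z j) ^ d j := by
  classical
  set Dp : Polynomial ℂ := ∏ j, (X - C (z j)) ^ c j with hDp
  set Ep : Polynomial ℂ := ∏ j, (X - C (z j)) with hEp
  set Sp : Polynomial ℂ := ∑ j, C ((c j : ℂ) + M j / κ) * ∏ k ∈ univ.erase j, (X - C (z k)) with hSp
  set N : Polynomial ℂ := derivative P * Ep - P * Sp with hNdef
  have main : ∀ t, (∀ j, t ≠ z j) →
      deriv f t + a t * f t = N.eval t / ∏ j, (t - z j) ^ (c j + 1) := by
    intro t ht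
    have hy : ∀ j, t - z j ≠ 0 := fun j => sub_ne_zero.mpr (ht j)
    have hDval : Dp.eval t = ∏ j, (t - z j) ^ c j := by simp [hDp, eval_prod]
    have hEval : Ep.eval t = ∏ j, (t - z j) := by simp [hEp, eval_prod]
    have hD0 : Dp.eval t ≠ 0 := by
      rw [hDval]; exact prod_ne_zero_iff.mpr fun j _ => pow_ne_zero _ (hy j)
    have hE0 : Ep.eval t ≠ 0 := by
      rw [hEval]; exact prod_ne_zero_iff.mpr fun j _ => hy j
    -- deriv f t
    have hopen : IsOpen {s : ℂ | ∀ j, s ≠ z j} := by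
      have : {s : ℂ | ∀ j, s ≠ z j} = ⋂ j, {z j}ᶜ := by ext s; simp [Set.mem_iInter]
      rw [this]
      exact isOpen_iInter_of_finite fun j => isOpen_compl_singleton
    have heq : f =ᶠ[nhds t] fun s => P.eval s / Dp.eval s := by
      filter_upwards [hopen.mem_nhds ht] with s hs
      rw [hf s hs, hDp]; simp [eval_prod]
    have h1 : HasDerivAt (fun s => Polynomial.eval s P) ((derivative P).eval t) t :=
      P.hasDerivAt t
    have h2 : HasDerivAt (fun s => Polynomial.eval s Dp) ((derivative Dp).eval t) t :=
      Dp.hasDerivAt t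
    have hderiv : deriv f t =
        ((derivative P).eval t * Dp.eval t - P.eval t * (derivative Dp).eval t)
          / (Dp.eval t) ^ 2 := by
      rw [heq.deriv_eq]; exact (h1.div h2 hD0).deriv
    -- key product derivative identity
    have hkey : (derivative Dp).eval t * Ep.eval t
        = Dp.eval t * ∑ j, (c j : ℂ) * ∏ k ∈ univ.erase j, (t - z k) := by
      rw [hDp, aux_derivative_prod]
      simp only [derivative_pow, derivative_X_sub_C, mul_one, eval_finset_sum, eval_mul,
        eval_prod, eval_pow, eval_sub, eval_X, eval_C, hEval, hDval]
      rw [Finset.sum_mul, Finset.mul_sum]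
      refine Finset.sum_congr rfl fun j _ => ?_
      rcases Nat.eq_zero_or_eq_succ_pred (c j) with h0 | hsucc
      · simp [h0]
      · rw [← Finset.mul_prod_erase univ (fun k => (t - z k) ^ c k) (mem_univ j),
          ← Finset.mul_prod_erase univ (fun k => (t - z k)) (mem_univ j)]
        rw [hsucc]
        simp only [Nat.succ_sub_one, Nat.succ_eq_add_one]
        ring
    set Sm : ℂ := ∑ j, M j * ∏ k ∈ univ.erase j, (t - z k) with hSm
    set Sc : ℂ := ∑ j, (c j : ℂ) * ∏ k ∈ univ.erase j, (t - z k) with hSc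
    have hA : ∑ j, M j / (t - z j) = Sm / Ep.eval t := by
      rw [eq_div_iff hE0, Finset.sum_mul]
      refine Finset.sum_congr rfl fun j _ => ?_
      rw [hEval, ← Finset.mul_prod_erase univ (fun k => (t - z k)) (mem_univ j)]
      field_simp [hy j]
    have hSpt : Sp.eval t = Sc + κ⁻¹ * Sm := by
      simp only [hSp, eval_finset_sum, eval_mul, eval_C, eval_prod, eval_sub, eval_X]
      rw [hSc, hSm, Finset.mul_sum, ← Finset.sum_add_distrib]
      refine Finset.sum_congr rfl fun j _ => ?_
      field_simp
    have hprodsucc : ∏ j, (t - z j) ^ (c j + 1) = Dp.eval t * Ep.eval t := by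
      rw [hDval, hEval, ← Finset.prod_mul_distrib]
      exact Finset.prod_congr rfl fun j _ => (pow_succ _ _)
    rw [hderiv, hf t ht, ha t, hA, hprodsucc, hNdef]
    simp only [eval_sub, eval_mul, hSpt, ← hDval]
    rw [show (derivative Dp).eval t = Dp.eval t * Sc / Ep.eval t from by
      rw [eq_div_iff hE0]; exact hkey]
    field_simp
    ring
  by_cases hc : c i = ai
  · -- resonance cancellation
    have hroot : N.IsRoot (z i) := by
      have hE : Ep.eval (z i) = 0 := by
        rw [hEp, eval_prod]
        exact Finset.prod_eq_zero (mem_univ i) (by simp)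
      have hS : Sp.eval (z i) = 0 := by
        rw [hSp, eval_finset_sum]
        refine Finset.sum_eq_zero fun j _ => ?_
        by_cases hji : j = i
        · subst hji
          have : (c j : ℂ) + M j / κ = 0 := by
            rw [hres, hc]; field_simp; ring
          simp [this]
        · rw [eval_mul, eval_prod]
          have : ∏ k ∈ univ.erase j, Polynomial.eval (z i) (X - C (z k)) = 0 :=
            Finset.prod_eq_zero (Finset.mem_erase.mpr ⟨fun h => hji h.symm, mem_univ i⟩)
              (by simp)
          rw [this, mul_zero]
      simp [Polynomial.IsRoot, hNdef, hE, hS]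
    obtain ⟨Q, hQ⟩ := Polynomial.dvd_iff_isRoot.mpr hroot
    refine ⟨Q, fun j => if j = i then c i else c j + 1, by simp [hc], fun t ht => ?_⟩
    have hy : ∀ j, t - z j ≠ 0 := fun j => sub_ne_zero.mpr (ht j)
    rw [main t ht, hQ]
    have hsplit : ∏ j, (t - z j) ^ (c j + 1)
        = (t - z i) * ((t - z i) ^ c i * ∏ k ∈ univ.erase i, (t - z k) ^ (c k + 1)) := by
      rw [← Finset.mul_prod_erase univ (fun k => (t - z k) ^ (c k + 1)) (mem_univ i)]
      ring
    have hsplit2 : ∏ j, (t - z j) ^ (if j = i then c i else c j + 1)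
        = (t - z i) ^ c i * ∏ k ∈ univ.erase i, (t - z k) ^ (c k + 1) := by
      rw [← Finset.mul_prod_erase univ
        (fun k => (t - z k) ^ (if k = i then c i else c k + 1)) (mem_univ i)]
      simp only [if_pos rfl]
      congr 1
      exact Finset.prod_congr rfl fun k hk => by
        rw [if_neg (Finset.mem_erase.mp hk).1]
    rw [hsplit, hsplit2, eval_mul, eval_sub, eval_X, eval_C,
      mul_div_mul_left _ _ (hy i)]
  · -- no resonance: pole order increases but stays ≤ ai
    exact ⟨N, fun j => c j + 1, Nat.succ_le_of_lt (lt_of_le_of_ne hci hc), main⟩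
end

section
/- Let \hat{sl}_2 = sl_2[T,T^{-1}] ⊕ ℂc with bracket [aT^i, bT^j] = [a,b]T^{i+j} + i·tr(ab)·δ_{i+j,0}·c, and let V be a module over \hat{sl}_2. Let k ∈ ℂ, κ = k + 2, M = -2 + 2κ. Suppose v ∈ V satisfies e·v = 0, (fT)·v = 0, h·v = M v, c·v = k v. Then the vector w = f·(eT^{-1})·(eT^{-1})·v + (1+κ)·(hT^{-1})·(eT^{-1})·v - (1+κ)κ·(eT^{-2})·v satisfies e·w = 0 and (fT)·w = 0. -/
/-- Example 4.6(2): in a module over the affine Lie algebra `\hat{sl}_2` (presented by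
generators `E i = eT^i`, `F i = fT^i`, `H i = hT^i`, central `c` and the affine bracket
relations), if `κ = k+2`, `M = -2+2κ` and `v` satisfies `e·v = 0`, `(fT)·v = 0`, `h·v = M v`,
`c·v = k v`, then the Malikov–Feigin–Fuchs vector
`w = f·(eT⁻¹)²·v + (1+κ)(hT⁻¹)(eT⁻¹)·v - (1+κ)κ(eT⁻²)·v` is annihilated by `e` and `fT`. -/
theorem stmt_11 (L : Type*) [LieRing L] [LieAlgebra ℂ L]
    (E F H : ℤ → L) (c : L)
    (hEE : ∀ i j : ℤ, ⁅E i, E j⁆ = 0)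
    (hFF : ∀ i j : ℤ, ⁅F i, F j⁆ = 0)
    (hHH : ∀ i j : ℤ, ⁅H i, H j⁆ = if i + j = 0 then (2 * (i : ℂ)) • c else 0)
    (hEF : ∀ i j : ℤ, ⁅E i, F j⁆ = H (i + j) + (if i + j = 0 then (i : ℂ) • c else 0))
    (hHE : ∀ i j : ℤ, ⁅H i, E j⁆ = (2 : ℂ) • E (i + j))
    (hHF : ∀ i j : ℤ, ⁅H i, F j⁆ = -((2 : ℂ) • F (i + j)))
    (hcentral : ∀ x : L, ⁅c, x⁆ = 0)
    (V : Type*) [AddCommGroup V] [Module ℂ V] [LieRingModule L V] [LieModule ℂ L V]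
    (k κ M : ℂ) (hκ : κ = k + 2) (hM : M = -2 + 2 * κ)
    (v : V) (hev : ⁅E 0, v⁆ = 0) (hfTv : ⁅F 1, v⁆ = 0)
    (hhv : ⁅H 0, v⁆ = M • v) (hcv : ⁅c, v⁆ = k • v)
    (w : V)
    (hw : w = ⁅F 0, ⁅E (-1), ⁅E (-1), v⁆⁆⁆ + (1 + κ) • ⁅H (-1), ⁅E (-1), v⁆⁆
            - ((1 + κ) * κ) • ⁅E (-2), v⁆) :
    ⁅E 0, w⁆ = 0 ∧ ⁅F 1, w⁆ = 0 := by
  have key : ∀ i j : ℤ, ⁅F i, E j⁆ = -(H (j + i)) - (if j + i = 0 then (j : ℂ) • c else 0) := by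
    intro i j
    rw [← lie_skew, hEF]
    abel
  have hEH : ⁅E 0, H (-1)⁆ = -((2:ℂ) • E (-1)) := by
    rw [← lie_skew, hHE]; norm_num
  have hFH : ⁅F 1, H (-1)⁆ = (2:ℂ) • F 0 := by
    rw [← lie_skew, hHF]; norm_num
  have hca : ⁅c, ⁅E (-1), v⁆⁆ = k • ⁅E (-1), v⁆ := by
    rw [leibniz_lie, hcentral, zero_lie, zero_add, hcv, lie_smul]
  have hE0a : ⁅E 0, ⁅E (-1), v⁆⁆ = 0 := by
    rw [leibniz_lie, hEE, hev, zero_lie, lie_zero, add_zero]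
  have hE0b : ⁅E 0, ⁅E (-1), ⁅E (-1), v⁆⁆⁆ = 0 := by
    rw [leibniz_lie, hEE, hE0a, zero_lie, lie_zero, add_zero]
  have hH0a : ⁅H 0, ⁅E (-1), v⁆⁆ = (M + 2) • ⁅E (-1), v⁆ := by
    rw [leibniz_lie, hHE, hhv, lie_smul]
    norm_num
    module
  have hH0b : ⁅H 0, ⁅E (-1), ⁅E (-1), v⁆⁆⁆ = (M + 4) • ⁅E (-1), ⁅E (-1), v⁆⁆ := by
    rw [leibniz_lie, hHE, hH0a, lie_smul]
    norm_num
    module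
  have hF1a : ⁅F 1, ⁅E (-1), v⁆⁆ = (k - M) • v := by
    rw [leibniz_lie, key, hfTv, lie_zero, add_zero]
    norm_num
    rw [hhv, hcv]
    module
  have hF1b : ⁅F 1, ⁅E (-1), ⁅E (-1), v⁆⁆⁆ = (2*k - 2*M - 2) • ⁅E (-1), v⁆ := by
    rw [leibniz_lie, key, hF1a, lie_smul]
    norm_num
    rw [hH0a, hca]
    module
  have h1 : ⁅E 0, ⁅F 0, ⁅E (-1), ⁅E (-1), v⁆⁆⁆⁆ = (M + 4) • ⁅E (-1), ⁅E (-1), v⁆⁆ := by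
    rw [leibniz_lie, hEF, hE0b, lie_zero, add_zero]
    norm_num
    exact hH0b
  have h2 : ⁅E 0, ⁅H (-1), ⁅E (-1), v⁆⁆⁆ = -((2:ℂ) • ⁅E (-1), ⁅E (-1), v⁆⁆) := by
    rw [leibniz_lie, hE0a, lie_zero, add_zero, hEH, neg_lie, smul_lie]
  have h3 : ⁅E 0, ⁅E (-2), v⁆⁆ = 0 := by
    rw [leibniz_lie, hEE, hev, zero_lie, lie_zero, add_zero]
  have h4 : ⁅F 1, ⁅F 0, ⁅E (-1), ⁅E (-1), v⁆⁆⁆⁆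
      = (2*k - 2*M - 2) • ⁅F 0, ⁅E (-1), v⁆⁆ := by
    rw [leibniz_lie, hFF, hF1b, zero_lie, zero_add, lie_smul]
  have h5 : ⁅F 1, ⁅H (-1), ⁅E (-1), v⁆⁆⁆
      = (2:ℂ) • ⁅F 0, ⁅E (-1), v⁆⁆ + (k - M) • ⁅H (-1), v⁆ := by
    rw [leibniz_lie, hFH, hF1a, lie_smul, smul_lie]
  have h6 : ⁅F 1, ⁅E (-2), v⁆⁆ = -⁅H (-1), v⁆ := by
    rw [leibniz_lie, key, hfTv, lie_zero, add_zero]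
    norm_num
  constructor
  · rw [hw, lie_sub, lie_add, lie_smul, lie_smul, h1, h2, h3, hM, hκ]
    module
  · rw [hw, lie_sub, lie_add, lie_smul, lie_smul, h4, h5, h6, hM, hκ]
    module
end

section
/- Let z_1,…,z_n be pairwise distinct complex numbers and M^1,…,M^n complex numbers, κ ≠ 0. Consider the rational 1-form in the variables (z_1,…,z_n,t): β = -Σ_{i=1}^n (M^i/κ) d(t-z_i)/(t-z_i) + Σ_{i<j} (M^i M^j/(2κ)) d(z_i-z_j)/(z_i-z_j), and let ω_i = M^i d(t-z_i)/(t-z_i). Then κ β ∧ ω_i = Σ_{j<k, i∉{j,k}} (M^j M^k/2) (d(z_j-z_k)/(z_j-z_k)) ∧ ω_i + Σ_{j≠i} (M^j(M^i-2)/2) (d(z_j-z_i)/(z_j-z_i)) ∧ ω_i + Σ_{j≠i} M^i (d(z_j-z_i)/(z_j-z_i)) ∧ ω_j, as an identity of rational 2-forms on the complement of the diagonals z_i = z_j and the hypersurfaces t = z_i in ℂ^{n+1}. -/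
open Finset in
/-- Formula (3.7): `κ β ∧ ω_i` expressed through logarithmic forms. Differential 1-forms on the
complement of the diagonals and hypersurfaces `t = z_i` in `ℂ^{n+1}` are encoded by their
coefficient functions in the coordinates (`some j ↦ z_j`, `none ↦ t`): `dT i` encodes
`d(t-z_i)/(t-z_i)`, `dZ i j` encodes `d(z_i-z_j)/(z_i-z_j)`, `B` encodes `β`, `W i` encodes
`ω_i`, and the wedge `A ∧ B` of 1-forms has `(s,s')`-coefficient `A s * B s' - A s' * B s`. -/
theorem stmt_14 (n : ℕ) (z : Fin n → ℂ) (t : ℂ) (hz : Function.Injective z)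
    (ht : ∀ j, t ≠ z j) (M : Fin n → ℂ) (κ : ℂ) (hκ : κ ≠ 0)
    (dT : Fin n → Option (Fin n) → ℂ)
    (hdTt : ∀ i, dT i none = (t - z i)⁻¹)
    (hdTz : ∀ i j, dT i (some j) = if j = i then -(t - z i)⁻¹ else 0)
    (dZ : Fin n → Fin n → Option (Fin n) → ℂ)
    (hdZt : ∀ i j, dZ i j none = 0)
    (hdZz : ∀ i j l, dZ i j (some l) =
      (if l = i then 1 else if l = j then -1 else 0) / (z i - z j))
    (B : Option (Fin n) → ℂ)
    (hB : ∀ s, B s = -(∑ i, (M i / κ) * dT i s) +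
      ∑ q ∈ univ.filter (fun q : Fin n × Fin n => q.1 < q.2),
        (M q.1 * M q.2 / (2 * κ)) * dZ q.1 q.2 s)
    (W : Fin n → Option (Fin n) → ℂ)
    (hW : ∀ i s, W i s = M i * dT i s)
    (i : Fin n) :
    ∀ s s' : Option (Fin n),
      κ * (B s * W i s' - B s' * W i s) =
        (∑ q ∈ univ.filter (fun q : Fin n × Fin n => q.1 < q.2 ∧ q.1 ≠ i ∧ q.2 ≠ i),
          (M q.1 * M q.2 / 2) * (dZ q.1 q.2 s * W i s' - dZ q.1 q.2 s' * W i s)) +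
        (∑ j ∈ univ.filter (· ≠ i),
          (M j * (M i - 2) / 2) * (dZ j i s * W i s' - dZ j i s' * W i s)) +
        ∑ j ∈ univ.filter (· ≠ i),
          M i * (dZ j i s * W j s' - dZ j i s' * W j s) := by
  intro s s'
  have hzne : ∀ j k : Fin n, j ≠ k → z j - z k ≠ 0 :=
    fun j k h => sub_ne_zero.mpr (fun e => h (hz e))
  have htne : ∀ j, t - z j ≠ 0 := fun j => sub_ne_zero.mpr (ht j)
  -- symmetry of dZ
  have dZsymm : ∀ j k : Fin n, j ≠ k → ∀ u, dZ j k u = dZ k j u := by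
    intro j k hjk u
    cases u with
    | none => rw [hdZt, hdZt]
    | some l =>
      rw [hdZz, hdZz]
      by_cases h1 : l = j
      · have h2 : l ≠ k := fun e => hjk (h1.symm.trans e)
        simp only [if_pos h1, if_neg h2]
        rw [div_eq_div_iff (hzne j k hjk) (hzne k j hjk.symm)]; ring
      · by_cases h2 : l = k
        · simp only [if_neg h1, if_pos h2]
          rw [div_eq_div_iff (hzne j k hjk) (hzne k j hjk.symm)]; ring
        · simp [h1, h2]
  -- proportionality (Arnold identity in disguise)
  have prop : ∀ j : Fin n, j ≠ i → ∀ u, dT i u - dZ j i u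
      = (t - z j) * (t - z i)⁻¹ * (dT j u - dZ j i u) := by
    intro j hj u
    have hti := htne i
    have htj := htne j
    have hzji := hzne j i hj
    cases u with
    | none =>
      rw [hdTt, hdTt, hdZt]
      field_simp
      ring
    | some l =>
      rw [hdTz, hdTz, hdZz]
      by_cases h1 : l = j
      · have h2 : l ≠ i := fun e => hj (h1.symm.trans e)
        simp only [if_pos h1, if_neg h2]
        field_simp
        try ring
      · by_cases h2 : l = i
        · simp only [if_neg h1, if_pos h2]
          field_simp
          try ring
        · simp [h1, h2]
  have arnold : ∀ j : Fin n, j ≠ i →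
      dT j s * dT i s' - dT j s' * dT i s
        = (dZ j i s * dT i s' - dZ j i s' * dT i s)
          - (dZ j i s * dT j s' - dZ j i s' * dT j s) := by
    intro j hj
    have h1 := prop j hj s
    have h2 := prop j hj s'
    have e1 : dT i s = dZ j i s + (t - z j) * (t - z i)⁻¹ * (dT j s - dZ j i s) := by
      linear_combination h1
    have e2 : dT i s' = dZ j i s' + (t - z j) * (t - z i)⁻¹ * (dT j s' - dZ j i s') := by
      linear_combination h2
    rw [e1, e2]; ring
  -- κ·B in cleaned-up form
  have hC : ∀ u, κ * B u = (-(∑ j, M j * dT j u)) +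
      ∑ q ∈ univ.filter (fun q : Fin n × Fin n => q.1 < q.2),
        (M q.1 * M q.2 / 2) * dZ q.1 q.2 u := by
    intro u
    rw [hB, mul_add, mul_neg, mul_sum, mul_sum]
    congr 1
    · congr 1
      refine Finset.sum_congr rfl fun j _ => ?_
      field_simp
    · refine Finset.sum_congr rfl fun q _ => ?_
      field_simp
  -- Step A: expand the LHS as sums
  have stepA : κ * (B s * W i s' - B s' * W i s)
      = (∑ j, (-M j) * (dT j s * W i s' - dT j s' * W i s))
        + ∑ q ∈ univ.filter (fun q : Fin n × Fin n => q.1 < q.2),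
            (M q.1 * M q.2 / 2) * (dZ q.1 q.2 s * W i s' - dZ q.1 q.2 s' * W i s) := by
    have h1 := hC s
    have h2 := hC s'
    calc κ * (B s * W i s' - B s' * W i s)
        = (κ * B s) * W i s' - (κ * B s') * W i s := by ring
      _ = ((-(∑ j, M j * dT j s)) +
            ∑ q ∈ univ.filter (fun q : Fin n × Fin n => q.1 < q.2),
              (M q.1 * M q.2 / 2) * dZ q.1 q.2 s) * W i s'
          - ((-(∑ j, M j * dT j s')) +
            ∑ q ∈ univ.filter (fun q : Fin n × Fin n => q.1 < q.2),
              (M q.1 * M q.2 / 2) * dZ q.1 q.2 s') * W i s := by rw [h1, h2]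
      _ = ((∑ j, M j * dT j s') * W i s - (∑ j, M j * dT j s) * W i s')
          + ((∑ q ∈ univ.filter (fun q : Fin n × Fin n => q.1 < q.2),
              (M q.1 * M q.2 / 2) * dZ q.1 q.2 s) * W i s'
            - (∑ q ∈ univ.filter (fun q : Fin n × Fin n => q.1 < q.2),
              (M q.1 * M q.2 / 2) * dZ q.1 q.2 s') * W i s) := by ring
      _ = _ := by
          congr 1
          · rw [Finset.sum_mul, Finset.sum_mul, ← Finset.sum_sub_distrib]
            exact Finset.sum_congr rfl fun j _ => by ring
          · rw [Finset.sum_mul, Finset.sum_mul, ← Finset.sum_sub_distrib]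
            exact Finset.sum_congr rfl fun q _ => by ring
  rw [stepA]
  -- Step B: the dT-sum restricted to j ≠ i, and rewritten via Arnold
  have stepB : (∑ j, (-M j) * (dT j s * W i s' - dT j s' * W i s))
      = (∑ j ∈ univ.filter (· ≠ i), (-M j) * (dZ j i s * W i s' - dZ j i s' * W i s))
        + ∑ j ∈ univ.filter (· ≠ i), M i * (dZ j i s * W j s' - dZ j i s' * W j s) := by
    rw [← Finset.sum_add_distrib]
    rw [show (∑ j, (-M j) * (dT j s * W i s' - dT j s' * W i s))
        = ∑ j ∈ univ.filter (· ≠ i), (-M j) * (dT j s * W i s' - dT j s' * W i s) from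
      (Finset.sum_filter_of_ne (fun j _ hne => by
        rintro rfl
        apply hne
        rw [hW, hW]
        ring)).symm]
    refine Finset.sum_congr rfl fun j hj => ?_
    have hji : j ≠ i := (Finset.mem_filter.mp hj).2
    have ha := arnold j hji
    rw [hW i s', hW i s, hW j s', hW j s]
    linear_combination (-(M j * M i)) * ha
  rw [stepB]
  -- Step C: split the pair sum
  have stepC : (∑ q ∈ univ.filter (fun q : Fin n × Fin n => q.1 < q.2),
        (M q.1 * M q.2 / 2) * (dZ q.1 q.2 s * W i s' - dZ q.1 q.2 s' * W i s))
      = (∑ q ∈ univ.filter (fun q : Fin n × Fin n => q.1 < q.2 ∧ q.1 ≠ i ∧ q.2 ≠ i),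
          (M q.1 * M q.2 / 2) * (dZ q.1 q.2 s * W i s' - dZ q.1 q.2 s' * W i s))
        + ∑ j ∈ univ.filter (· ≠ i),
            (M j * M i / 2) * (dZ j i s * W i s' - dZ j i s' * W i s) := by
    rw [← Finset.sum_filter_add_sum_filter_not
      (univ.filter (fun q : Fin n × Fin n => q.1 < q.2))
      (fun q : Fin n × Fin n => q.1 ≠ i ∧ q.2 ≠ i)]
    congr 1
    · rw [Finset.filter_filter]
    · have memS : ∀ q : Fin n × Fin n,
          q ∈ (univ.filter (fun q : Fin n × Fin n => q.1 < q.2)).filter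
            (fun q => ¬(q.1 ≠ i ∧ q.2 ≠ i)) → q.1 < q.2 ∧ (q.1 = i ∨ q.2 = i) := by
        intro q hq
        have h1 := (Finset.mem_filter.mp hq).2
        have h2 := (Finset.mem_filter.mp (Finset.mem_filter.mp hq).1).2
        refine ⟨h2, ?_⟩
        by_contra hcon
        push_neg at hcon
        exact h1 ⟨hcon.1, hcon.2⟩
      refine Finset.sum_nbij' (fun q => if q.1 = i then q.2 else q.1)
        (fun j => if j < i then (j, i) else (i, j)) ?_ ?_ ?_ ?_ ?_
      · intro q hq
        obtain ⟨hlt, hor⟩ := memS q hq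
        simp only [Finset.mem_filter, Finset.mem_univ, true_and]
        by_cases h : q.1 = i
        · rw [if_pos h]
          exact fun e => (ne_of_gt hlt) (e.trans h.symm)
        · rw [if_neg h]; exact h
      · intro j hj
        simp only [Finset.mem_filter, Finset.mem_univ, true_and] at hj
        by_cases h : j < i
        · rw [if_pos h]
          simp only [Finset.mem_filter, Finset.mem_univ, true_and]
          exact ⟨h, fun hc => hc.2 rfl⟩
        · have h' : i < j := lt_of_le_of_ne (not_lt.mp h) (Ne.symm hj)
          rw [if_neg h]
          simp only [Finset.mem_filter, Finset.mem_univ, true_and]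
          exact ⟨h', fun hc => hc.1 rfl⟩
      · intro q hq
        obtain ⟨hlt, hor⟩ := memS q hq
        by_cases h : q.1 = i
        · rw [if_pos h]
          have : ¬ q.2 < i := not_lt.mpr (le_of_lt (h ▸ hlt))
          rw [if_neg this, ← h]
        · have h2 : q.2 = i := hor.resolve_left h
          rw [if_neg h, if_pos (h2 ▸ hlt), ← h2]
      · intro j hj
        simp only [Finset.mem_filter, Finset.mem_univ, true_and] at hj
        by_cases h : j < i
        · rw [if_pos h]
          simp [hj]
        · rw [if_neg h]
          simp
      · intro q hq
        obtain ⟨hlt, hor⟩ := memS q hq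
        by_cases h : q.1 = i
        · rw [if_pos h]
          have hne : i ≠ q.2 := fun e => (ne_of_gt hlt) (e.symm.trans h.symm)
          rw [h, dZsymm i q.2 hne s, dZsymm i q.2 hne s']
          ring
        · have h2 : q.2 = i := hor.resolve_left h
          rw [if_neg h, h2]
          try ring
  rw [stepC]
  -- assemble
  have final : ∑ j ∈ univ.filter (· ≠ i),
      (M j * (M i - 2) / 2) * (dZ j i s * W i s' - dZ j i s' * W i s)
      = (∑ j ∈ univ.filter (· ≠ i), (-M j) * (dZ j i s * W i s' - dZ j i s' * W i s))
        + ∑ j ∈ univ.filter (· ≠ i),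
            (M j * M i / 2) * (dZ j i s * W i s' - dZ j i s' * W i s) := by
    rw [← Finset.sum_add_distrib]
    exact Finset.sum_congr rfl fun j _ => by ring
  rw [final]
  ring
end
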